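/- (Theorem 3.1, existence) The function P(t) = ( D(t) − C₀ − (ω/(2α))·X(t) + c̃₁·ω²·cosh(ωt) )/( C₁ + 1/(2α) ) satisfies, for all t ∈ [0, T], the equilibrium equation D(t) − C₀ − C₁·P(t) = −c₁(P)·ω²·cosh(ωt) + P(t)/(2α) + ∫_0^t ω·sinh(ω(t−s))·(P(s)/(2α)) ds. -/

import Mathlib

open Set MeasureTheory intervalIntegral

noncomputable def Icf (h : ℝ → ℝ) (ν t : ℝ) : ℝ := ∫ s in (0:ℝ)..t, h s * Real.cosh (ν * s)
noncomputable def Isf (h : ℝ → ℝ) (ν t : ℝ) : ℝ := ∫ s in (0:ℝ)..t, h s * Real.sinh (ν * s)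
noncomputable def Sf (h : ℝ → ℝ) (ν t : ℝ) : ℝ :=
  Real.sinh (ν * t) * Icf h ν t - Real.cosh (ν * t) * Isf h ν t
noncomputable def Cf (h : ℝ → ℝ) (ν t : ℝ) : ℝ :=
  Real.cosh (ν * t) * Icf h ν t - Real.sinh (ν * t) * Isf h ν t

lemma intInt {T : ℝ} {h : ℝ → ℝ} (hh : ContinuousOn h (Icc 0 T)) {k : ℝ → ℝ}
    (hk : Continuous k) {t : ℝ} (ht : t ∈ Icc (0:ℝ) T) :
    IntervalIntegrable (fun s => h s * k s) volume 0 t := by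
  apply ContinuousOn.intervalIntegrable
  apply ContinuousOn.mul (hh.mono ?_) hk.continuousOn
  rw [uIcc_of_le ht.1]
  exact Icc_subset_Icc le_rfl ht.2

lemma Sf_eq {T : ℝ} {h : ℝ → ℝ} (hh : ContinuousOn h (Icc 0 T)) (ν : ℝ) {t : ℝ}
    (ht : t ∈ Icc (0:ℝ) T) :
    Sf h ν t = ∫ s in (0:ℝ)..t, h s * Real.sinh (ν * (t - s)) := by
  have key : ∀ s : ℝ, h s * Real.sinh (ν * (t - s))
      = Real.sinh (ν * t) * (h s * Real.cosh (ν * s))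
        - Real.cosh (ν * t) * (h s * Real.sinh (ν * s)) := by
    intro s
    rw [show ν * (t - s) = ν * t - ν * s by ring, Real.sinh_sub]
    ring
  simp_rw [key]
  rw [intervalIntegral.integral_sub ((intInt hh (by fun_prop) ht).const_mul _)
      ((intInt hh (by fun_prop) ht).const_mul _),
    intervalIntegral.integral_const_mul, intervalIntegral.integral_const_mul]
  rfl

lemma Cf_eq {T : ℝ} {h : ℝ → ℝ} (hh : ContinuousOn h (Icc 0 T)) (ν : ℝ) {t : ℝ}
    (ht : t ∈ Icc (0:ℝ) T) :
    Cf h ν t = ∫ s in (0:ℝ)..t, h s * Real.cosh (ν * (t - s)) := by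
  have key : ∀ s : ℝ, h s * Real.cosh (ν * (t - s))
      = Real.cosh (ν * t) * (h s * Real.cosh (ν * s))
        - Real.sinh (ν * t) * (h s * Real.sinh (ν * s)) := by
    intro s
    rw [show ν * (t - s) = ν * t - ν * s by ring, Real.cosh_sub]
    ring
  simp_rw [key]
  rw [intervalIntegral.integral_sub ((intInt hh (by fun_prop) ht).const_mul _)
      ((intInt hh (by fun_prop) ht).const_mul _),
    intervalIntegral.integral_const_mul, intervalIntegral.integral_const_mul]
  rfl

lemma cont_Icf {T : ℝ} (hT : 0 ≤ T) {h : ℝ → ℝ} (hh : ContinuousOn h (Icc 0 T)) (ν : ℝ) :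
    ContinuousOn (Icf h ν) (Icc 0 T) := by
  have hint : IntegrableOn (fun s => h s * Real.cosh (ν * s)) (uIcc 0 T) volume := by
    rw [uIcc_of_le hT]
    exact (hh.mul (by fun_prop)).integrableOn_compact isCompact_Icc
  show ContinuousOn (fun t => ∫ s in (0:ℝ)..t, h s * Real.cosh (ν * s)) (Icc 0 T)
  simpa [uIcc_of_le hT] using intervalIntegral.continuousOn_primitive_interval hint

lemma cont_Isf {T : ℝ} (hT : 0 ≤ T) {h : ℝ → ℝ} (hh : ContinuousOn h (Icc 0 T)) (ν : ℝ) :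
    ContinuousOn (Isf h ν) (Icc 0 T) := by
  have hint : IntegrableOn (fun s => h s * Real.sinh (ν * s)) (uIcc 0 T) volume := by
    rw [uIcc_of_le hT]
    exact (hh.mul (by fun_prop)).integrableOn_compact isCompact_Icc
  show ContinuousOn (fun t => ∫ s in (0:ℝ)..t, h s * Real.sinh (ν * s)) (Icc 0 T)
  simpa [uIcc_of_le hT] using intervalIntegral.continuousOn_primitive_interval hint

lemma cont_Sf {T : ℝ} (hT : 0 ≤ T) {h : ℝ → ℝ} (hh : ContinuousOn h (Icc 0 T)) (ν : ℝ) :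
    ContinuousOn (Sf h ν) (Icc 0 T) := by
  unfold Sf
  exact ((Continuous.continuousOn (by fun_prop)).mul (cont_Icf hT hh ν)).sub
    ((Continuous.continuousOn (by fun_prop)).mul (cont_Isf hT hh ν))

lemma cont_Cf {T : ℝ} (hT : 0 ≤ T) {h : ℝ → ℝ} (hh : ContinuousOn h (Icc 0 T)) (ν : ℝ) :
    ContinuousOn (Cf h ν) (Icc 0 T) := by
  unfold Cf
  exact ((Continuous.continuousOn (by fun_prop)).mul (cont_Icf hT hh ν)).sub
    ((Continuous.continuousOn (by fun_prop)).mul (cont_Isf hT hh ν))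

lemma hasDeriv_Icf {T : ℝ} {h : ℝ → ℝ} (hh : ContinuousOn h (Icc 0 T)) (ν : ℝ) {x : ℝ}
    (hx : x ∈ Ico (0:ℝ) T) :
    HasDerivWithinAt (Icf h ν) (h x * Real.cosh (ν * x)) (Ici x) x := by
  have hmem : Icc (0:ℝ) T ∈ nhdsWithin x (Ici x) := Icc_mem_nhdsGE_of_mem hx
  have hmem' : Icc (0:ℝ) T ∈ nhdsWithin x (Ioi x) :=
    nhdsWithin_mono x Ioi_subset_Ici_self hmem
  have hcont : ContinuousOn (fun s => h s * Real.cosh (ν * s)) (Icc 0 T) :=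
    hh.mul (by fun_prop)
  exact intervalIntegral.integral_hasDerivWithinAt_right
    (intInt hh (by fun_prop) ⟨hx.1, hx.2.le⟩)
    ⟨Icc 0 T, hmem', hcont.aestronglyMeasurable measurableSet_Icc⟩
    ((hcont x ⟨hx.1, hx.2.le⟩).mono_of_mem_nhdsWithin hmem')

lemma hasDeriv_Isf {T : ℝ} {h : ℝ → ℝ} (hh : ContinuousOn h (Icc 0 T)) (ν : ℝ) {x : ℝ}
    (hx : x ∈ Ico (0:ℝ) T) :
    HasDerivWithinAt (Isf h ν) (h x * Real.sinh (ν * x)) (Ici x) x := by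
  have hmem : Icc (0:ℝ) T ∈ nhdsWithin x (Ici x) := Icc_mem_nhdsGE_of_mem hx
  have hmem' : Icc (0:ℝ) T ∈ nhdsWithin x (Ioi x) :=
    nhdsWithin_mono x Ioi_subset_Ici_self hmem
  have hcont : ContinuousOn (fun s => h s * Real.sinh (ν * s)) (Icc 0 T) :=
    hh.mul (by fun_prop)
  exact intervalIntegral.integral_hasDerivWithinAt_right
    (intInt hh (by fun_prop) ⟨hx.1, hx.2.le⟩)
    ⟨Icc 0 T, hmem', hcont.aestronglyMeasurable measurableSet_Icc⟩
    ((hcont x ⟨hx.1, hx.2.le⟩).mono_of_mem_nhdsWithin hmem')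

lemma hasDeriv_sinh (ν x : ℝ) (s : Set ℝ) :
    HasDerivWithinAt (fun t => Real.sinh (ν * t)) (ν * Real.cosh (ν * x)) s x := by
  have := (((hasDerivAt_id x).const_mul ν).sinh).hasDerivWithinAt (s := s)
  simpa [mul_comm] using this

lemma hasDeriv_cosh (ν x : ℝ) (s : Set ℝ) :
    HasDerivWithinAt (fun t => Real.cosh (ν * t)) (ν * Real.sinh (ν * x)) s x := by
  have := (((hasDerivAt_id x).const_mul ν).cosh).hasDerivWithinAt (s := s)
  simpa [mul_comm] using this

lemma hasDeriv_Sf {T : ℝ} {h : ℝ → ℝ} (hh : ContinuousOn h (Icc 0 T)) (ν : ℝ) {x : ℝ}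
    (hx : x ∈ Ico (0:ℝ) T) :
    HasDerivWithinAt (Sf h ν) (ν * Cf h ν x) (Ici x) x := by
  have h1 := ((hasDeriv_sinh ν x (Ici x)).mul (hasDeriv_Icf hh ν hx)).sub
    ((hasDeriv_cosh ν x (Ici x)).mul (hasDeriv_Isf hh ν hx))
  refine h1.congr_deriv (Eq.symm ?_)
  unfold Cf
  ring

lemma hasDeriv_Cf {T : ℝ} {h : ℝ → ℝ} (hh : ContinuousOn h (Icc 0 T)) (ν : ℝ) {x : ℝ}
    (hx : x ∈ Ico (0:ℝ) T) :
    HasDerivWithinAt (Cf h ν) (ν * Sf h ν x + h x) (Ici x) x := by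
  have h1 := ((hasDeriv_cosh ν x (Ici x)).mul (hasDeriv_Icf hh ν hx)).sub
    ((hasDeriv_sinh ν x (Ici x)).mul (hasDeriv_Isf hh ν hx))
  refine h1.congr_deriv (Eq.symm ?_)
  unfold Sf
  linear_combination (-(h x)) * Real.cosh_sq_sub_sinh_sq (ν * x)

lemma ode_unique {T w : ℝ} {G G₂ : ℝ → ℝ}
    (hGc : ContinuousOn G (Icc 0 T)) (hG₂c : ContinuousOn G₂ (Icc 0 T))
    (hG : ∀ x ∈ Ico (0:ℝ) T, HasDerivWithinAt G (G₂ x) (Ici x) x)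
    (hG₂ : ∀ x ∈ Ico (0:ℝ) T, HasDerivWithinAt G₂ (w^2 * G x) (Ici x) x)
    (hG0 : G 0 = 0) (hG₂0 : G₂ 0 = 0) :
    ∀ t ∈ Icc (0:ℝ) T, G t = 0 ∧ G₂ t = 0 := by
  have key : ∀ t ∈ Icc (0:ℝ) T, G₂ t = w * G t := by
    have hFc : ContinuousOn (fun t => (G₂ t - w * G t) * Real.exp (w * t)) (Icc 0 T) :=
      (hG₂c.sub (continuousOn_const.mul hGc)).mul (Continuous.continuousOn (by fun_prop))
    have hFd : ∀ x ∈ Ico (0:ℝ) T,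
        HasDerivWithinAt (fun t => (G₂ t - w * G t) * Real.exp (w * t)) 0 (Ici x) x := by
      intro x hx
      have he : HasDerivWithinAt (fun t => Real.exp (w * t)) (Real.exp (w * x) * w) (Ici x) x := by
        have := (((hasDerivAt_id x).const_mul w).exp).hasDerivWithinAt (s := Ici x)
        simpa [mul_comm] using this
      have h1 := ((hG₂ x hx).sub ((hG x hx).const_mul w)).mul he
      refine h1.congr_deriv (Eq.symm ?_)
      simp only [Pi.sub_apply]
      ring
    have hconst := constant_of_has_deriv_right_zero hFc hFd
    intro t ht
    have h0 : (G₂ t - w * G t) * Real.exp (w * t) = 0 := by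
      have := hconst t ht
      simpa [hG0, hG₂0] using this
    have h1 := (mul_eq_zero.mp h0).resolve_right (Real.exp_ne_zero _)
    linarith [h1]
  have key2 : ∀ t ∈ Icc (0:ℝ) T, G t = 0 := by
    have hHc : ContinuousOn (fun t => G t * Real.exp (-(w * t))) (Icc 0 T) :=
      hGc.mul (Continuous.continuousOn (by fun_prop))
    have hHd : ∀ x ∈ Ico (0:ℝ) T,
        HasDerivWithinAt (fun t => G t * Real.exp (-(w * t))) 0 (Ici x) x := by
      intro x hx
      have he : HasDerivWithinAt (fun t => Real.exp (-(w * t)))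
          (Real.exp (-(w * x)) * (-w)) (Ici x) x := by
        have := (((hasDerivAt_id x).const_mul w).neg.exp).hasDerivWithinAt (s := Ici x)
        simpa [mul_comm] using this
      have h1 := (hG x hx).mul he
      refine h1.congr_deriv (Eq.symm ?_)
      rw [key x ⟨hx.1, hx.2.le⟩]
      ring
    have hconst := constant_of_has_deriv_right_zero hHc hHd
    intro t ht
    have h0 : G t * Real.exp (-(w * t)) = 0 := by
      have := hconst t ht
      simpa [hG0] using this
    exact (mul_eq_zero.mp h0).resolve_right (Real.exp_ne_zero _)
  intro t ht
  refine ⟨key2 t ht, ?_⟩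
  rw [key t ht, key2 t ht, mul_zero]

lemma split_integral {T : ℝ} {D : ℝ → ℝ} (hD : ContinuousOn D (Icc 0 T)) {t : ℝ}
    (ht : t ∈ Icc (0:ℝ) T) (a b c C₀ : ℝ) {k : ℝ → ℝ} (hk : Continuous k) :
    ∫ u in (0:ℝ)..t, (a * (D u - C₀) + b * Real.cosh (c * u)) * k u
      = a * (∫ u in (0:ℝ)..t, (D u - C₀) * k u)
        + b * ∫ u in (0:ℝ)..t, Real.cosh (c * u) * k u := by
  have hDk : IntervalIntegrable (fun u => (D u - C₀) * k u) volume 0 t :=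
    intInt (hD.sub continuousOn_const) hk ht
  have hck : IntervalIntegrable (fun u => Real.cosh (c * u) * k u) volume 0 t := by
    apply Continuous.intervalIntegrable
    fun_prop
  have key : ∀ u, (a * (D u - C₀) + b * Real.cosh (c * u)) * k u
      = a * ((D u - C₀) * k u) + b * (Real.cosh (c * u) * k u) := fun u => by ring
  simp_rw [key]
  rw [intervalIntegral.integral_add (hDk.const_mul a) (hck.const_mul b),
    intervalIntegral.integral_const_mul, intervalIntegral.integral_const_mul]

lemma keyalg (α C₁ ω ω' c1 σ S d c : ℝ) (hα : 0 < α) (hK : (0:ℝ) < C₁ + 1/(2*α)) (hω'0 : 0 < ω')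
    (hsq : ω'^2 = ω^2 * (C₁ / (C₁ + 1/(2*α)))) :
    ω^2 * ((1/ω') * σ - S)
      = ω' * σ + ((ω/(C₁+1/(2*α))) * d + c1*(ω^3/(C₁+1/(2*α)))*c)
        - ω*(ω*S + (d - (ω/(2*α))*((1/ω')*σ) + c1*ω^2*c)/(C₁+1/(2*α))) := by
  have h2 : (2:ℝ)*α ≠ 0 := by positivity
  have h3 : C₁*(2*α)+1 ≠ 0 := by
    have h := mul_pos hK (by positivity : (0:ℝ) < 2*α)
    rw [add_mul, one_div_mul_cancel h2] at h
    nlinarith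
  have hsq3 : ω'^2 * (C₁*(2*α)+1) = ω^2 * C₁ * (2*α) := by
    have hKK : (C₁ + 1/(2*α)) * (2*α) = C₁*(2*α)+1 := by field_simp
    calc ω'^2 * (C₁*(2*α)+1) = ω^2 * (C₁ / (C₁ + 1/(2*α))) * (C₁*(2*α)+1) := by rw [hsq]
    _ = ω^2 * C₁ * (2*α) := by
      rw [← hKK, mul_assoc, ← mul_assoc (C₁ / _), div_mul_cancel₀ _ hK.ne']; ring
  have hKK1 : C₁ / (C₁ + 1/(2*α)) + (1/(2*α)) / (C₁ + 1/(2*α)) = 1 := by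
    rw [← add_div, div_self hK.ne']
  have hz : ω^2 - ω'^2 - ω^2 * (1/(2*α)) / (C₁ + 1/(2*α)) = 0 := by
    rw [hsq]; linear_combination (-ω^2) * hKK1
  have hinv : ω' = ω'^2 * (1/ω') := by
    rw [pow_two, mul_assoc, mul_one_div_cancel hω'0.ne', mul_one]
  linear_combination (σ/ω') * hz - σ * hinv

theorem stmt_14 (α β γ T : ℝ) (hα : 0 < α) (hβ : 0 < β) (hγ : 0 < γ) (hT : 0 < T)
    (ω u : ℝ) (hω : ω = Real.sqrt (β / α))
    (hu : u = (Real.sqrt (α * β) - γ) / (Real.sqrt (α * β) + γ))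
    (c₁ : (ℝ → ℝ) → ℝ)
    (hc₁ : ∀ Φ : ℝ → ℝ, c₁ Φ =
      (γ * (∫ s in (0:ℝ)..T, Real.cosh (ω * (T - s)) * (Φ s / (2 * α))) +
        β * ∫ s in (0:ℝ)..T, (Real.sinh (ω * (T - s)) / ω) * (Φ s / (2 * α))) /
      (γ * ω * Real.sinh (ω * T) + β * Real.cosh (ω * T)))
    (C₀ C₁ : ℝ) (hC₁ : 0 < C₁)
    (D : ℝ → ℝ) (hD : ContinuousOn D (Set.Icc 0 T))
    (ω' : ℝ) (hω' : ω' = ω * Real.sqrt (C₁ / (C₁ + 1 / (2 * α))))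
    (A B A' B' : ℝ)
    (hA : A = (ω / (ω' * (C₁ + 1 / (2 * α)))) *
      ∫ s in (0:ℝ)..T, (D s - C₀) * Real.sinh (ω' * (T - s)))
    (hB : B = (ω ^ 3 / (ω' * (C₁ + 1 / (2 * α)))) *
      ∫ s in (0:ℝ)..T, Real.cosh (ω * s) * Real.sinh (ω' * (T - s)))
    (hA' : A' = (ω / (C₁ + 1 / (2 * α))) *
      ∫ s in (0:ℝ)..T, (D s - C₀) * Real.cosh (ω' * (T - s)))
    (hB' : B' = (ω ^ 3 / (C₁ + 1 / (2 * α))) *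
      ∫ s in (0:ℝ)..T, Real.cosh (ω * s) * Real.cosh (ω' * (T - s)))
    (hden : 2 * α * ω * (γ * ω * Real.sinh (ω * T) + β * Real.cosh (ω * T))
      - γ * B' - β * B ≠ 0)
    (c1tilde : ℝ)
    (hc1tilde : c1tilde = (γ * A' + β * A) /
      (2 * α * ω * (γ * ω * Real.sinh (ω * T) + β * Real.cosh (ω * T)) - γ * B' - β * B))
    (X : ℝ → ℝ)
    (hX : ∀ t, X t = (ω / (ω' * (C₁ + 1 / (2 * α)))) *
        (∫ s in (0:ℝ)..t, (D s - C₀) * Real.sinh (ω' * (t - s))) +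
      c1tilde * (ω ^ 3 / (ω' * (C₁ + 1 / (2 * α)))) *
        ∫ s in (0:ℝ)..t, Real.cosh (ω * s) * Real.sinh (ω' * (t - s)))
    (P : ℝ → ℝ)
    (hP : ∀ t, P t = (D t - C₀ - (ω / (2 * α)) * X t + c1tilde * ω ^ 2 * Real.cosh (ω * t)) /
      (C₁ + 1 / (2 * α))) :
    ∀ t ∈ Set.Icc (0 : ℝ) T,
      D t - C₀ - C₁ * P t = -(c₁ P) * ω ^ 2 * Real.cosh (ω * t) + P t / (2 * α) +
        ∫ s in (0:ℝ)..t, ω * Real.sinh (ω * (t - s)) * (P s / (2 * α)) := by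
  have hK : (0:ℝ) < C₁ + 1 / (2 * α) := by positivity
  have hω0 : 0 < ω := by rw [hω]; exact Real.sqrt_pos.mpr (div_pos hβ hα)
  have hω'0 : 0 < ω' := by
    rw [hω']
    exact mul_pos hω0 (Real.sqrt_pos.mpr (div_pos hC₁ hK))
  have hω'sq : ω' ^ 2 = ω ^ 2 * (C₁ / (C₁ + 1 / (2 * α))) := by
    rw [hω', mul_pow, Real.sq_sqrt (div_pos hC₁ hK).le]
  set g : ℝ → ℝ := fun s => (ω / (C₁ + 1 / (2 * α))) * (D s - C₀)
      + c1tilde * (ω ^ 3 / (C₁ + 1 / (2 * α))) * Real.cosh (ω * s) with hgdef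
  have hgc : ContinuousOn g (Icc 0 T) := by
    apply ContinuousOn.add
    · exact continuousOn_const.mul (hD.sub continuousOn_const)
    · exact continuousOn_const.mul (Continuous.continuousOn (by fun_prop))
  have hXeq : ∀ s ∈ Icc (0:ℝ) T, X s = (1 / ω') * Sf g ω' s := by
    intro s hs
    rw [hX s, Sf_eq hgc ω' hs, hgdef]
    rw [split_integral hD hs _ _ _ _ (by fun_prop)]
    field_simp
  have hXc : ContinuousOn X (Icc 0 T) :=
    (continuousOn_const.mul (cont_Sf hT.le hgc ω')).congr hXeq
  have hPc : ContinuousOn P (Icc 0 T) := by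
    refine ContinuousOn.congr (f := fun s =>
      (D s - C₀ - (ω / (2 * α)) * X s + c1tilde * ω ^ 2 * Real.cosh (ω * s))
        / (C₁ + 1 / (2 * α))) ?_ (fun s _ => hP s)
    apply ContinuousOn.div_const
    exact ((hD.sub continuousOn_const).sub (continuousOn_const.mul hXc)).add
      (continuousOn_const.mul (Continuous.continuousOn (by fun_prop)))
  have hzero : ∀ s ∈ Icc (0:ℝ) T,
      ((1 / ω') * Sf g ω' s - Sf P ω s = 0) ∧
      (Cf g ω' s - ω * Cf P ω s = 0) := by
    apply ode_unique (w := ω)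
    · exact (continuousOn_const.mul (cont_Sf hT.le hgc ω')).sub (cont_Sf hT.le hPc ω)
    · exact (cont_Cf hT.le hgc ω').sub (continuousOn_const.mul (cont_Cf hT.le hPc ω))
    · intro x hx
      have h1 := (((hasDeriv_Sf hgc ω' hx).const_mul (1/ω')).sub (hasDeriv_Sf hPc ω hx))
      refine h1.congr_deriv (Eq.symm ?_)
      field_simp
    · intro x hx
      have hx' : x ∈ Icc (0:ℝ) T := ⟨hx.1, hx.2.le⟩
      have h1 := ((hasDeriv_Cf hgc ω' hx).sub ((hasDeriv_Cf hPc ω hx).const_mul ω))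
      refine h1.congr_deriv (Eq.symm ?_)
      have hPx : P x = (D x - C₀ - (ω / (2 * α)) * ((1/ω') * Sf g ω' x)
          + c1tilde * ω ^ 2 * Real.cosh (ω * x)) / (C₁ + 1 / (2 * α)) := by
        rw [hP x, hXeq x hx']
      rw [hPx]
      simp only [hgdef]
      exact keyalg α C₁ ω ω' c1tilde (Sf g ω' x) (Sf P ω x) (D x - C₀) (Real.cosh (ω * x))
        hα hK hω'0 hω'sq
    · simp [Sf, Icf, Isf]
    · simp [Cf, Icf, Isf]
  have hT' : T ∈ Icc (0:ℝ) T := ⟨hT.le, le_rfl⟩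
  have hSPX : ∀ s ∈ Icc (0:ℝ) T, Sf P ω s = X s := by
    intro s hs
    have h1 := (hzero s hs).1
    rw [hXeq s hs]
    linarith
  have hXT : X T = A + c1tilde * B := by rw [hX T, hA, hB]; ring
  have hCfg : Cf g ω' T = A' + c1tilde * B' := by
    rw [Cf_eq hgc ω' hT', hgdef, split_integral hD hT' _ _ _ _ (by fun_prop), hA', hB']
    ring
  have hCfP : ω * Cf P ω T = A' + c1tilde * B' := by
    rw [← hCfg]
    linarith [(hzero T hT').2]
  have hint1 : (∫ s in (0:ℝ)..T, Real.cosh (ω * (T - s)) * (P s / (2 * α)))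
      = (1/(2*α)) * Cf P ω T := by
    have key : ∀ s, Real.cosh (ω * (T - s)) * (P s / (2 * α))
        = (1/(2*α)) * (P s * Real.cosh (ω * (T - s))) := fun s => by ring
    simp_rw [key]
    rw [intervalIntegral.integral_const_mul, ← Cf_eq hPc ω hT']
  have hint2 : (∫ s in (0:ℝ)..T, (Real.sinh (ω * (T - s)) / ω) * (P s / (2 * α)))
      = (1/(2*α*ω)) * Sf P ω T := by
    have key : ∀ s, (Real.sinh (ω * (T - s)) / ω) * (P s / (2 * α))
        = (1/(2*α*ω)) * (P s * Real.sinh (ω * (T - s))) := fun s => by ring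
    simp_rw [key]
    rw [intervalIntegral.integral_const_mul, ← Sf_eq hPc ω hT']
  have hc₁P : c₁ P = c1tilde := by
    rw [hc₁ P, hint1, hint2]
    have hd0 : (0:ℝ) < γ * ω * Real.sinh (ω * T) + β * Real.cosh (ω * T) := by
      have h1 : 0 < Real.sinh (ω * T) := Real.sinh_pos_iff.mpr (by positivity)
      have h2 : 0 < Real.cosh (ω * T) := Real.cosh_pos _
      positivity
    rw [div_eq_iff hd0.ne']
    have h1 : c1tilde * (2 * α * ω * (γ * ω * Real.sinh (ω * T) + β * Real.cosh (ω * T))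
        - γ * B' - β * B) = γ * A' + β * A := by
      rw [hc1tilde, div_mul_cancel₀ _ hden]
    have h2 : Sf P ω T = A + c1tilde * B := by rw [hSPX T hT', hXT]
    have h3 : Cf P ω T = (A' + c1tilde * B') / ω := by
      rw [← hCfP]
      field_simp
    rw [h2, h3]
    field_simp
    linear_combination -h1
  intro t ht
  have hintP : (∫ s in (0:ℝ)..t, ω * Real.sinh (ω * (t - s)) * (P s / (2 * α)))
      = (ω/(2*α)) * Sf P ω t := by
    have key : ∀ s, ω * Real.sinh (ω * (t - s)) * (P s / (2 * α))
        = (ω/(2*α)) * (P s * Real.sinh (ω * (t - s))) := fun s => by ring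
    simp_rw [key]
    rw [intervalIntegral.integral_const_mul, ← Sf_eq hPc ω ht]
  rw [hintP, hSPX t ht, hc₁P]
  have hPt : P t * (C₁ + 1 / (2 * α)) = D t - C₀ - (ω / (2 * α)) * X t
      + c1tilde * ω ^ 2 * Real.cosh (ω * t) := by
    rw [hP t, div_mul_cancel₀ _ hK.ne']
  linear_combination -hPt
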